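/- The graph on standard Young tableaux of a fixed shape λ whose edges are the initial dual Knuth transformations is connected. -/

import Mathlib

/-- `f` is a standard Young tableau of shape `μ ⊢ r` (with `r = μ.card`):
it is zero off the diagram, restricts to a bijection from the cells of `μ` onto
`{1, ..., r}`, and its entries strictly increase along rows and columns. -/
def IsSYT (μ : YoungDiagram) (f : ℕ × ℕ → ℕ) : Prop :=
  (∀ c, c ∉ μ → f c = 0) ∧
  Set.BijOn f (μ.cells : Set (ℕ × ℕ)) (Set.Icc 1 μ.card) ∧
  (∀ c1 ∈ μ, ∀ c2 ∈ μ, c1.1 = c2.1 → c1.2 < c2.2 → f c1 < f c2) ∧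
  (∀ c1 ∈ μ, ∀ c2 ∈ μ, c1.2 = c2.2 → c1.1 < c2.1 → f c1 < f c2)

/-- The descent set `R(Q)` of a standard Young tableau: those `i` such that
`i+1` lies strictly south of (in a strictly lower row than) `i`. -/
def SYTDescents (μ : YoungDiagram) (f : ℕ × ℕ → ℕ) : Set ℕ :=
  { i | ∃ c ∈ μ, ∃ c' ∈ μ, f c = i ∧ f c' = i + 1 ∧ c.1 < c'.1 }

/-- `f'` is obtained from `f` by the dual Knuth transformation exchanging the
entries `i` and `i+1` (both are standard Young tableaux of shape `μ`). -/
def DKT (μ : YoungDiagram) (i : ℕ) (f f' : ℕ × ℕ → ℕ) : Prop :=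
  IsSYT μ f ∧ IsSYT μ f' ∧ 1 ≤ i ∧
  ∀ c, f' c = if f c = i then i + 1 else if f c = i + 1 then i else f c

/-- `f` and `f'` differ by an *initial* dual Knuth transformation: a dual Knuth
transformation exchanging the entries `i`, `i+1` such that
`|R(Q') ∩ {i-1, i}| = |R(Q) ∩ {i-1, i}| = 1`. -/
def InitialDKT (μ : YoungDiagram) (f f' : ℕ × ℕ → ℕ) : Prop :=
  ∃ i, DKT μ i f f' ∧
    (SYTDescents μ f ∩ {i - 1, i}).ncard = 1 ∧
    (SYTDescents μ f' ∩ {i - 1, i}).ncard = 1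

namespace SYTAux

def IsCorner (μ : YoungDiagram) (c : ℕ × ℕ) : Prop :=
  c ∈ μ ∧ (c.1 + 1, c.2) ∉ μ ∧ (c.1, c.2 + 1) ∉ μ

lemma pair_mem (μ : YoungDiagram) (x : ℕ × ℕ) (h : x ∈ μ) : (x.1, x.2) ∈ μ := by
  simpa using h

def erase (μ : YoungDiagram) (c : ℕ × ℕ) (h : IsCorner μ c) : YoungDiagram :=
  ⟨μ.cells.erase c, by
    intro y x hxy hy
    simp only [Finset.coe_erase, Set.mem_diff, Finset.mem_coe, YoungDiagram.mem_cells,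
      Set.mem_singleton_iff] at hy ⊢
    obtain ⟨hyμ, hyc⟩ := hy
    refine ⟨μ.isLowerSet hxy hyμ, ?_⟩
    intro hxc
    obtain ⟨h1, h2⟩ := hxy
    rw [hxc] at h1 h2
    rcases h.2 with ⟨hA, hB⟩
    have hy' : (y.1, y.2) ∈ μ := pair_mem μ y hyμ
    rcases Nat.lt_or_ge c.1 y.1 with hlt | hge
    · exact hA (μ.up_left_mem hlt h2 hy')
    · have he1 : c.1 = y.1 := le_antisymm h1 hge
      have hlt2 : c.2 < y.2 := by
        rcases lt_or_eq_of_le h2 with hh | hh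
        · exact hh
        · exact absurd (Prod.ext he1.symm hh.symm) hyc
      exact hB (μ.up_left_mem (le_of_eq he1) hlt2 hy')⟩

@[simp] lemma mem_erase {μ : YoungDiagram} {c : ℕ × ℕ} {h : IsCorner μ c} {x : ℕ × ℕ} :
    x ∈ erase μ c h ↔ x ∈ μ ∧ x ≠ c := by
  change x ∈ μ.cells.erase c ↔ _
  rw [Finset.mem_erase]
  simp [YoungDiagram.mem_cells, and_comm]

lemma card_erase {μ : YoungDiagram} {c : ℕ × ℕ} (h : IsCorner μ c) :
    (erase μ c h).card + 1 = μ.card := by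
  have h1 : (erase μ c h).cells = μ.cells.erase c := rfl
  have h2 : c ∈ μ.cells := by simpa [YoungDiagram.mem_cells] using h.1
  have h3 : 0 < μ.cells.card := Finset.card_pos.mpr ⟨c, h2⟩
  show (erase μ c h).cells.card + 1 = μ.cells.card
  rw [h1, Finset.card_erase_of_mem h2]
  omega

def ext (c : ℕ × ℕ) (m : ℕ) (f : ℕ × ℕ → ℕ) : ℕ × ℕ → ℕ :=
  fun x => if x = c then m else f x

@[simp] lemma ext_self {c : ℕ × ℕ} {m : ℕ} {f : ℕ × ℕ → ℕ} : ext c m f c = m := by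
  simp [ext]

lemma ext_ne {c x : ℕ × ℕ} {m : ℕ} {f : ℕ × ℕ → ℕ} (h : x ≠ c) : ext c m f x = f x := by
  simp [ext, h]

lemma isSYT_ext {μ : YoungDiagram} {c : ℕ × ℕ} (h : IsCorner μ c) {f : ℕ × ℕ → ℕ}
    (hf : IsSYT (erase μ c h) f) : IsSYT μ (ext c μ.card f) := by
  obtain ⟨h0, hb, hrow, hcol⟩ := hf
  have hcard : (erase μ c h).card + 1 = μ.card := card_erase h
  have hmem : ∀ x, x ∈ μ → x ≠ c → x ∈ erase μ c h := fun x h1 h2 => mem_erase.mpr ⟨h1, h2⟩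
  have hle : ∀ x, x ∈ erase μ c h → 1 ≤ f x ∧ f x ≤ (erase μ c h).card := by
    intro x hx
    have := hb.mapsTo (by simpa [YoungDiagram.mem_cells] using hx)
    rwa [Set.mem_Icc] at this
  constructor
  · intro x hx
    have hxc : x ≠ c := by rintro rfl; exact hx h.1
    have hxν : x ∉ erase μ c h := fun hmem' => hx (mem_erase.mp hmem').1
    rw [ext_ne hxc]
    exact h0 x hxν
  refine ⟨⟨?_, ?_, ?_⟩, ?_, ?_⟩
  · -- MapsTo
    intro x hx
    simp only [Finset.mem_coe, YoungDiagram.mem_cells] at hx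
    rw [Set.mem_Icc]
    by_cases hxc : x = c
    · rw [hxc, ext_self]; omega
    · rw [ext_ne hxc]
      have := hle x (hmem x hx hxc); omega
  · -- InjOn
    intro x hx y hy hxy
    simp only [Finset.mem_coe, YoungDiagram.mem_cells] at hx hy
    by_cases hxc : x = c <;> by_cases hyc : y = c
    · rw [hxc, hyc]
    · exfalso
      rw [hxc, ext_self, ext_ne hyc] at hxy
      have := hle y (hmem y hy hyc); omega
    · exfalso
      rw [hyc, ext_self, ext_ne hxc] at hxy
      have := hle x (hmem x hx hxc); omega
    · rw [ext_ne hxc, ext_ne hyc] at hxy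
      exact hb.injOn (by simpa [YoungDiagram.mem_cells] using hmem x hx hxc)
        (by simpa [YoungDiagram.mem_cells] using hmem y hy hyc) hxy
  · -- SurjOn
    intro v hv
    rw [Set.mem_Icc] at hv
    by_cases hvn : v = μ.card
    · exact ⟨c, by simpa [YoungDiagram.mem_cells] using h.1, by rw [ext_self, hvn]⟩
    · have : v ∈ Set.Icc 1 (erase μ c h).card := by rw [Set.mem_Icc]; omega
      obtain ⟨x, hx, hfx⟩ := hb.surjOn this
      simp only [Finset.mem_coe, YoungDiagram.mem_cells, mem_erase] at hx
      refine ⟨x, by simpa [YoungDiagram.mem_cells] using hx.1, ?_⟩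
      rw [ext_ne hx.2]; exact hfx
  · -- rows
    intro c1 hc1 c2 hc2 hr hlt
    by_cases h1c : c1 = c
    · exfalso
      rw [h1c] at hr hlt
      exact h.2.2 (μ.up_left_mem (le_of_eq hr) hlt (pair_mem μ c2 hc2))
    · by_cases h2c : c2 = c
      · rw [ext_ne h1c, h2c, ext_self]
        have := hle c1 (hmem c1 hc1 h1c); omega
      · rw [ext_ne h1c, ext_ne h2c]
        exact hrow c1 (hmem c1 hc1 h1c) c2 (hmem c2 hc2 h2c) hr hlt
  · -- cols
    intro c1 hc1 c2 hc2 hr hlt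
    by_cases h1c : c1 = c
    · exfalso
      rw [h1c] at hr hlt
      exact h.2.1 (μ.up_left_mem hlt (le_of_eq hr) (pair_mem μ c2 hc2))
    · by_cases h2c : c2 = c
      · rw [ext_ne h1c, h2c, ext_self]
        have := hle c1 (hmem c1 hc1 h1c); omega
      · rw [ext_ne h1c, ext_ne h2c]
        exact hcol c1 (hmem c1 hc1 h1c) c2 (hmem c2 hc2 h2c) hr hlt

end SYTAux

namespace SYTAux

lemma isSYT_injOn {μ : YoungDiagram} {f : ℕ × ℕ → ℕ} (hf : IsSYT μ f) :
    ∀ x, x ∈ μ → ∀ y, y ∈ μ → f x = f y → x = y := by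
  intro x hx y hy hxy
  exact hf.2.1.injOn (by simpa [YoungDiagram.mem_cells] using hx)
    (by simpa [YoungDiagram.mem_cells] using hy) hxy

lemma isSYT_mem_Icc {μ : YoungDiagram} {f : ℕ × ℕ → ℕ} (hf : IsSYT μ f) :
    ∀ x, x ∈ μ → 1 ≤ f x ∧ f x ≤ μ.card := by
  intro x hx
  have := hf.2.1.mapsTo (by simpa [YoungDiagram.mem_cells] using hx)
  rwa [Set.mem_Icc] at this

lemma isSYT_surj {μ : YoungDiagram} {f : ℕ × ℕ → ℕ} (hf : IsSYT μ f) :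
    ∀ v, 1 ≤ v → v ≤ μ.card → ∃ x, x ∈ μ ∧ f x = v := by
  intro v h1 h2
  obtain ⟨x, hx, hfx⟩ := hf.2.1.surjOn (by rw [Set.mem_Icc]; exact ⟨h1, h2⟩)
  exact ⟨x, by simpa [YoungDiagram.mem_cells] using hx, hfx⟩

/-- The cell holding the maximal entry is a corner. -/
lemma max_corner {μ : YoungDiagram} {f : ℕ × ℕ → ℕ} (hf : IsSYT μ f) {c : ℕ × ℕ}
    (hc : c ∈ μ) (hfc : f c = μ.card) : IsCorner μ c := by
  refine ⟨hc, ?_, ?_⟩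
  · intro hmem
    have h1 : f c < f (c.1 + 1, c.2) := by
      apply hf.2.2.2 (c.1, c.2) (pair_mem μ c hc) _ hmem rfl (by omega)
    have h2 := (isSYT_mem_Icc hf _ hmem).2
    rw [hfc] at h1; omega
  · intro hmem
    have h1 : f c < f (c.1, c.2 + 1) := by
      apply hf.2.2.1 (c.1, c.2) (pair_mem μ c hc) _ hmem rfl (by omega)
    have h2 := (isSYT_mem_Icc hf _ hmem).2
    rw [hfc] at h1; omega

def res (c : ℕ × ℕ) (f : ℕ × ℕ → ℕ) : ℕ × ℕ → ℕ :=
  fun x => if x = c then 0 else f x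

lemma ext_res {μ : YoungDiagram} {f : ℕ × ℕ → ℕ} {c : ℕ × ℕ}
    (hfc : f c = μ.card) : ext c μ.card (res c f) = f := by
  funext x
  by_cases hx : x = c
  · rw [hx, ext_self, hfc]
  · rw [ext_ne hx]; simp [res, hx]

lemma isSYT_res {μ : YoungDiagram} {f : ℕ × ℕ → ℕ} (hf : IsSYT μ f) {c : ℕ × ℕ}
    (h : IsCorner μ c) (hfc : f c = μ.card) : IsSYT (erase μ c h) (res c f) := by
  have hcard : (erase μ c h).card + 1 = μ.card := card_erase h
  constructor
  · intro x hx
    by_cases hxc : x = c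
    · simp [res, hxc]
    · have : x ∉ μ := by
        intro hmem; exact hx (mem_erase.mpr ⟨hmem, hxc⟩)
      simp [res, hxc, hf.1 x this]
  refine ⟨⟨?_, ?_, ?_⟩, ?_, ?_⟩
  · intro x hx
    simp only [Finset.mem_coe, YoungDiagram.mem_cells, mem_erase] at hx
    have h1 := isSYT_mem_Icc hf x hx.1
    have h2 : f x ≠ μ.card := by
      intro he
      exact hx.2 (isSYT_injOn hf x hx.1 c h.1 (he.trans hfc.symm))
    rw [Set.mem_Icc]
    simp only [res, if_neg hx.2]
    omega
  · intro x hx y hy hxy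
    simp only [Finset.mem_coe, YoungDiagram.mem_cells, mem_erase] at hx hy
    simp only [res, if_neg hx.2, if_neg hy.2] at hxy
    exact isSYT_injOn hf x hx.1 y hy.1 hxy
  · intro v hv
    rw [Set.mem_Icc] at hv
    obtain ⟨x, hx, hfx⟩ := isSYT_surj hf v hv.1 (by omega)
    have hxc : x ≠ c := by
      intro he; rw [he, hfc] at hfx; omega
    refine ⟨x, ?_, ?_⟩
    · simp only [Finset.mem_coe, YoungDiagram.mem_cells, mem_erase]
      exact ⟨hx, hxc⟩
    · simp [res, hxc, hfx]
  · intro c1 hc1 c2 hc2 hr hlt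
    rw [mem_erase] at hc1 hc2
    simp only [res, if_neg hc1.2, if_neg hc2.2]
    exact hf.2.2.1 c1 hc1.1 c2 hc2.1 hr hlt
  · intro c1 hc1 c2 hc2 hr hlt
    rw [mem_erase] at hc1 hc2
    simp only [res, if_neg hc1.2, if_neg hc2.2]
    exact hf.2.2.2 c1 hc1.1 c2 hc2.1 hr hlt

/-- Every Young diagram has a standard Young tableau. -/
lemma exists_isSYT : ∀ (n : ℕ) (μ : YoungDiagram), μ.card = n → ∃ f, IsSYT μ f := by
  intro n
  induction n with
  | zero =>
    intro μ hμ
    have he : μ.cells = ∅ := Finset.card_eq_zero.mp hμ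
    have hnm : ∀ c : ℕ × ℕ, c ∉ μ := by
      intro c hc
      have : c ∈ (∅ : Finset (ℕ × ℕ)) := he ▸ (YoungDiagram.mem_cells _).mpr hc
      simp at this
    refine ⟨fun _ => 0, fun c _ => rfl, ?_, ?_, ?_⟩
    · constructor
      · intro x hx
        simp only [Finset.mem_coe, YoungDiagram.mem_cells] at hx
        exact absurd hx (by rw [← YoungDiagram.mem_cells] at hx ⊢; exact hnm x)
      constructor
      · intro x hx y hy _
        exact absurd ((YoungDiagram.mem_cells _).mp (by simpa using hx)) (hnm x)
      · intro v hv
        rw [Set.mem_Icc, hμ] at hv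
        omega
    · intro c1 hc1; exact absurd hc1 (hnm c1)
    · intro c1 hc1; exact absurd hc1 (hnm c1)
  | succ m ih =>
    intro μ hμ
    have hne : μ.cells.Nonempty := by
      have h0 : (0:ℕ) < μ.card := by rw [hμ]; omega
      rw [← Finset.card_pos]
      exact h0
    obtain ⟨c, hc, hmax⟩ : ∃ c ∈ μ.cells, ∀ x' ∈ μ.cells, ¬ c < x' := by
      obtain ⟨c, hc⟩ := Finset.exists_maximal hne
      exact ⟨c, hc.1, fun x' hx' hlt => lt_irrefl c (lt_of_lt_of_le hlt (hc.2 hx' hlt.le))⟩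
    have hcμ : c ∈ μ := (YoungDiagram.mem_cells _).mp hc
    have hcorner : IsCorner μ c := by
      refine ⟨hcμ, ?_, ?_⟩
      · intro hmem
        apply hmax (c.1 + 1, c.2) ((YoungDiagram.mem_cells _).mpr hmem)
        constructor
        · exact ⟨by omega, le_rfl⟩
        · intro hle
          have := hle.1; simp at this
      · intro hmem
        apply hmax (c.1, c.2 + 1) ((YoungDiagram.mem_cells _).mpr hmem)
        constructor
        · exact ⟨le_rfl, by omega⟩
        · intro hle
          have := hle.2; simp at this
    have hcard : (erase μ c hcorner).card = m := by
      have := card_erase hcorner; omega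
    obtain ⟨f, hf⟩ := ih (erase μ c hcorner) hcard
    exact ⟨ext c μ.card f, isSYT_ext hcorner hf⟩

end SYTAux

namespace SYTAux

/-- Swapping `i` and `i+1` located in different rows and different columns
preserves standardness. -/
lemma isSYT_swap {μ : YoungDiagram} {f : ℕ × ℕ → ℕ} (hf : IsSYT μ f) {a b : ℕ × ℕ} {i : ℕ}
    (hi : 1 ≤ i) (ha : a ∈ μ) (hb : b ∈ μ) (hfa : f a = i) (hfb : f b = i + 1)
    (hrow : a.1 ≠ b.1) (hcol : a.2 ≠ b.2) (g : ℕ × ℕ → ℕ)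
    (hg : ∀ x, g x = if f x = i then i + 1 else if f x = i + 1 then i else f x) :
    IsSYT μ g := by
  have hib : i + 1 ≤ μ.card := by
    have := (isSYT_mem_Icc hf b hb).2; omega
  have hinj : ∀ x, x ∈ μ → ∀ y, y ∈ μ → f x = f y → x = y := isSYT_injOn hf
  constructor
  · intro x hx
    have h0 := hf.1 x hx
    rw [hg x, h0, if_neg (by omega), if_neg (by omega)]
  refine ⟨⟨?_, ?_, ?_⟩, ?_, ?_⟩
  · intro x hx
    simp only [Finset.mem_coe, YoungDiagram.mem_cells] at hx
    have h1 := isSYT_mem_Icc hf x hx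
    rw [Set.mem_Icc, hg x]
    split_ifs <;> omega
  · intro x hx y hy hxy
    simp only [Finset.mem_coe, YoungDiagram.mem_cells] at hx hy
    rw [hg x, hg y] at hxy
    apply hinj x hx y hy
    split_ifs at hxy <;> omega
  · intro v hv
    rw [Set.mem_Icc] at hv
    by_cases e1 : v = i
    · refine ⟨b, by simpa [YoungDiagram.mem_cells] using hb, ?_⟩
      rw [hg b, hfb, if_neg (by omega), if_pos rfl, e1]
    · by_cases e2 : v = i + 1
      · refine ⟨a, by simpa [YoungDiagram.mem_cells] using ha, ?_⟩
        rw [hg a, hfa, if_pos rfl, e2]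
      · obtain ⟨x, hx, hfx⟩ := isSYT_surj hf v hv.1 hv.2
        refine ⟨x, by simpa [YoungDiagram.mem_cells] using hx, ?_⟩
        rw [hg x, hfx, if_neg e1, if_neg e2]
  · intro c1 hc1 c2 hc2 hr hlt
    have hmono := hf.2.2.1 c1 hc1 c2 hc2 hr hlt
    have hni : ¬(f c1 = i ∧ f c2 = i + 1) := by
      rintro ⟨u, v⟩
      have h1 : c1 = a := hinj c1 hc1 a ha (u.trans hfa.symm)
      have h2 : c2 = b := hinj c2 hc2 b hb (v.trans hfb.symm)
      rw [h1, h2] at hr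
      exact hrow hr
    rw [hg c1, hg c2]
    split_ifs <;> omega
  · intro c1 hc1 c2 hc2 hr hlt
    have hmono := hf.2.2.2 c1 hc1 c2 hc2 hr hlt
    have hni : ¬(f c1 = i ∧ f c2 = i + 1) := by
      rintro ⟨u, v⟩
      have h1 : c1 = a := hinj c1 hc1 a ha (u.trans hfa.symm)
      have h2 : c2 = b := hinj c2 hc2 b hb (v.trans hfb.symm)
      rw [h1, h2] at hr
      exact hcol hr
    rw [hg c1, hg c2]
    split_ifs <;> omega

end SYTAux

namespace SYTAux

lemma initialDKT_symm {μ : YoungDiagram} {f f' : ℕ × ℕ → ℕ} (h : InitialDKT μ f f') :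
    InitialDKT μ f' f := by
  obtain ⟨i, ⟨hf, hf', hi, hformula⟩, hn1, hn2⟩ := h
  refine ⟨i, ⟨hf', hf, hi, ?_⟩, hn2, hn1⟩
  intro c
  have := hformula c
  by_cases e1 : f c = i
  · rw [if_pos e1] at this
    rw [this, if_neg (by omega), if_pos rfl, e1]
  · rw [if_neg e1] at this
    by_cases e2 : f c = i + 1
    · rw [if_pos e2] at this
      rw [this, if_pos rfl, e2]
    · rw [if_neg e2] at this
      rw [this, if_neg e1, if_neg e2]

/-- In an initial DKT with parameter `i`, necessarily `i + 1 ≤ μ.card`. -/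
lemma dkt_bound {μ : YoungDiagram} {i : ℕ} {f f' : ℕ × ℕ → ℕ} (hd : DKT μ i f f')
    (hn : (SYTDescents μ f ∩ {i - 1, i}).ncard = 1) : i + 1 ≤ μ.card := by
  obtain ⟨hf, hf', hi, hformula⟩ := hd
  have hne : (SYTDescents μ f ∩ {i - 1, i}).Nonempty := by
    rw [Set.ncard_eq_one] at hn
    obtain ⟨x, hx⟩ := hn
    exact hx ▸ ⟨x, rfl⟩
  obtain ⟨j, hj, hj2⟩ := hne
  obtain ⟨c1, hc1, c2, hc2, hfc1, hfc2, hrlt⟩ := hj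
  have hble : f c2 ≤ μ.card := (isSYT_mem_Icc hf c2 hc2).2
  -- j = i - 1 or j = i; in either case i ≤ μ.card
  have hile : i ≤ μ.card := by
    simp only [Set.mem_insert_iff, Set.mem_singleton_iff] at hj2
    rcases hj2 with h | h <;> omega
  -- if i = μ.card then the cell with value i would map to i+1 > μ.card under f'
  by_contra hcon
  have hieq : i = μ.card := by omega
  obtain ⟨x, hx, hfx⟩ := isSYT_surj hf i hi hile
  have := hformula x
  rw [if_pos hfx] at this
  have := (isSYT_mem_Icc hf' x hx).2
  omega

/-- Descents below the top value are unaffected by extension at a corner. -/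
lemma descents_ext {μ : YoungDiagram} {c : ℕ × ℕ} (h : IsCorner μ c) {f : ℕ × ℕ → ℕ}
    (hf : IsSYT (erase μ c h) f) {j : ℕ} (hj : j + 1 < μ.card) :
    (j ∈ SYTDescents μ (ext c μ.card f) ↔ j ∈ SYTDescents (erase μ c h) f) := by
  have hcard : (erase μ c h).card + 1 = μ.card := card_erase h
  constructor
  · rintro ⟨c1, hc1, c2, hc2, h1, h2, hlt⟩
    have hc1c : c1 ≠ c := by
      intro e; rw [e, ext_self] at h1; omega
    have hc2c : c2 ≠ c := by
      intro e; rw [e, ext_self] at h2; omega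
    rw [ext_ne hc1c] at h1
    rw [ext_ne hc2c] at h2
    exact ⟨c1, mem_erase.mpr ⟨hc1, hc1c⟩, c2, mem_erase.mpr ⟨hc2, hc2c⟩, h1, h2, hlt⟩
  · rintro ⟨c1, hc1, c2, hc2, h1, h2, hlt⟩
    rw [mem_erase] at hc1 hc2
    exact ⟨c1, hc1.1, c2, hc2.1, by rw [ext_ne hc1.2]; exact h1,
      by rw [ext_ne hc2.2]; exact h2, hlt⟩

/-- Lifting an initial DKT through extension at a corner. -/
lemma initialDKT_ext {μ : YoungDiagram} {c : ℕ × ℕ} (h : IsCorner μ c) {f f' : ℕ × ℕ → ℕ}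
    (hd : InitialDKT (erase μ c h) f f') :
    InitialDKT μ (ext c μ.card f) (ext c μ.card f') := by
  obtain ⟨i, hdkt, hn1, hn2⟩ := hd
  have hcard : (erase μ c h).card + 1 = μ.card := card_erase h
  have hib : i + 1 ≤ (erase μ c h).card := dkt_bound hdkt hn1
  obtain ⟨hf, hf', hi, hformula⟩ := hdkt
  have hd1 : ∀ j, j ∈ ({i - 1, i} : Set ℕ) → j + 1 < μ.card := by
    intro j hj
    simp only [Set.mem_insert_iff, Set.mem_singleton_iff] at hj
    rcases hj with h | h <;> omega
  have hseteq : ∀ (g : ℕ × ℕ → ℕ), IsSYT (erase μ c h) g →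
      SYTDescents μ (ext c μ.card g) ∩ {i - 1, i} = SYTDescents (erase μ c h) g ∩ {i - 1, i} := by
    intro g hg
    ext j
    simp only [Set.mem_inter_iff]
    constructor
    · rintro ⟨hd', hj⟩
      exact ⟨(descents_ext h hg (hd1 j hj)).mp hd', hj⟩
    · rintro ⟨hd', hj⟩
      exact ⟨(descents_ext h hg (hd1 j hj)).mpr hd', hj⟩
  refine ⟨i, ⟨isSYT_ext h hf, isSYT_ext h hf', hi, ?_⟩, ?_, ?_⟩
  · intro x
    by_cases hxc : x = c
    · rw [hxc, ext_self, ext_self, if_neg (by omega), if_neg (by omega)]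
    · rw [ext_ne hxc, ext_ne hxc, hformula x]
  · rw [hseteq f hf]; exact hn1
  · rw [hseteq f' hf']; exact hn2

lemma rtg_ext {μ : YoungDiagram} {c : ℕ × ℕ} (h : IsCorner μ c) {f f' : ℕ × ℕ → ℕ}
    (hr : Relation.ReflTransGen (InitialDKT (erase μ c h)) f f') :
    Relation.ReflTransGen (InitialDKT μ) (ext c μ.card f) (ext c μ.card f') := by
  induction hr with
  | refl => exact Relation.ReflTransGen.refl
  | tail _ hstep ih => exact ih.tail (initialDKT_ext h hstep)

lemma rtg_symm {μ : YoungDiagram} {f f' : ℕ × ℕ → ℕ}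
    (hr : Relation.ReflTransGen (InitialDKT μ) f f') :
    Relation.ReflTransGen (InitialDKT μ) f' f := by
  induction hr with
  | refl => exact Relation.ReflTransGen.refl
  | tail _ hstep ih =>
    exact (Relation.ReflTransGen.single (initialDKT_symm hstep)).trans ih

end SYTAux

namespace SYTAux

lemma notmem_erase {μ : YoungDiagram} {c : ℕ × ℕ} {h : IsCorner μ c} {x : ℕ × ℕ}
    (hx : x ∉ μ) : x ∉ erase μ c h := by
  rw [mem_erase]; exact fun hc => hx hc.1

lemma self_notmem_erase {μ : YoungDiagram} {c : ℕ × ℕ} {h : IsCorner μ c} :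
    c ∉ erase μ c h := by
  rw [mem_erase]; exact fun hc => hc.2 rfl

/-- Key move: if the maximal entry is at a corner which is not in the lowest
occupied row, it can be moved (by initial DKTs) to a corner strictly lower. -/
lemma moveStep {μ : YoungDiagram} {f : ℕ × ℕ → ℕ} {c : ℕ × ℕ}
    (hf : IsSYT μ f) (hc : IsCorner μ c) (hfc : f c = μ.card)
    (hbelow : (c.1 + 1, 0) ∈ μ)
    (IH : ∀ (ν : YoungDiagram), ν.card < μ.card → ∀ g g' : ℕ × ℕ → ℕ, IsSYT ν g → IsSYT ν g' →
      Relation.ReflTransGen (InitialDKT ν) g g') :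
    ∃ (c' : ℕ × ℕ) (f' : ℕ × ℕ → ℕ), IsCorner μ c' ∧ c.1 < c'.1 ∧ IsSYT μ f' ∧
      f' c' = μ.card ∧ Relation.ReflTransGen (InitialDKT μ) f f' := by
  set L := μ.rowLen (c.1 + 1) with hLdef
  have hL : 1 ≤ L := by
    have : (0 : ℕ) < μ.rowLen (c.1 + 1) := by
      rw [← YoungDiagram.mem_iff_lt_rowLen]; exact hbelow
    omega
  have hLc : L ≤ c.2 := by
    have := hc.2.1
    rw [YoungDiagram.mem_iff_lt_rowLen] at this
    omega
  -- find the lowest row r' with the same length L below row c.1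
  have hP : ∃ r, c.1 + 1 ≤ r ∧ μ.rowLen (r + 1) < L := by
    refine ⟨max (c.1 + 1) (μ.colLen 0), le_max_left _ _, ?_⟩
    have h0 : (max (c.1 + 1) (μ.colLen 0) + 1, 0) ∉ μ := by
      rw [YoungDiagram.mem_iff_lt_colLen]
      have := le_max_right (c.1 + 1) (μ.colLen 0)
      omega
    rw [YoungDiagram.mem_iff_lt_rowLen] at h0
    omega
  set r' := Nat.find hP with hr'def
  obtain ⟨hr'1, hr'2⟩ : c.1 + 1 ≤ r' ∧ μ.rowLen (r' + 1) < L := Nat.find_spec hP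
  have hmin : ∀ m, m < r' → ¬(c.1 + 1 ≤ m ∧ μ.rowLen (m + 1) < L) := fun m hm =>
    Nat.find_min hP hm
  have hrowge : ∀ d, c.1 + 1 + d ≤ r' → L ≤ μ.rowLen (c.1 + 1 + d) := by
    intro d
    induction d with
    | zero =>
      intro _
      rw [Nat.add_zero, ← hLdef]
    | succ e ihe =>
      intro hle
      have h1 : c.1 + 1 + e < r' := by omega
      have h2 := hmin (c.1 + 1 + e) h1
      have h3 : L ≤ μ.rowLen (c.1 + 1 + e) := ihe (by omega)
      have : ¬ μ.rowLen (c.1 + 1 + e + 1) < L := by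
        intro hlt; exact h2 ⟨by omega, hlt⟩
      have he : c.1 + 1 + (e + 1) = c.1 + 1 + e + 1 := by omega
      rw [he]; omega
  have hroweq : ∀ r, c.1 + 1 ≤ r → r ≤ r' → μ.rowLen r = L := by
    intro r h1 h2
    have hge : L ≤ μ.rowLen r := by
      have := hrowge (r - (c.1 + 1)) (by omega)
      have he : c.1 + 1 + (r - (c.1 + 1)) = r := by omega
      rwa [he] at this
    have hle' : μ.rowLen r ≤ L := μ.rowLen_anti (c.1 + 1) r h1
    omega
  have hrL : μ.rowLen r' = L := hroweq r' hr'1 le_rfl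
  set c' : ℕ × ℕ := (r', L - 1) with hc'def
  have hc'mem : c' ∈ μ := by
    rw [hc'def, YoungDiagram.mem_iff_lt_rowLen, hrL]; omega
  have hc'corner : IsCorner μ c' := by
    refine ⟨hc'mem, ?_, ?_⟩
    · rw [YoungDiagram.mem_iff_lt_rowLen]
      show ¬ (L - 1 < μ.rowLen (r' + 1))
      omega
    · rw [YoungDiagram.mem_iff_lt_rowLen]
      show ¬ (L - 1 + 1 < μ.rowLen r')
      rw [hrL]; omega
  have hrr : c.1 < c'.1 := by
    show c.1 < r'; omega
  have hc'nec : c' ≠ c := by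
    intro e
    have := congrArg Prod.fst e
    simp only [hc'def] at this
    omega
  set ν := erase μ c hc with hνdef
  have hc'ν : IsCorner ν c' := by
    refine ⟨mem_erase.mpr ⟨hc'mem, hc'nec⟩, notmem_erase hc'corner.2.1, notmem_erase hc'corner.2.2⟩
  set ν₂ := erase ν c' hc'ν with hν₂def
  -- the auxiliary cell p
  obtain ⟨p, hpmem, hpc, hpc', hprow1, hprow2, hpcorner⟩ :
      ∃ p : ℕ × ℕ, p ∈ μ ∧ p ≠ c ∧ p ≠ c' ∧ c.1 ≤ p.1 ∧ p.1 < r' ∧ IsCorner ν₂ p := by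
    have hc2pos : 1 ≤ c.2 := by omega
    rcases eq_or_lt_of_le hr'1 with hcase | hcase
    · -- r' = c.1 + 1 : take p = (c.1, c.2 - 1)
      have hpμ : (c.1, c.2 - 1) ∈ μ := μ.up_left_mem le_rfl (by omega) (pair_mem μ c hc.1)
      have hpnec : (c.1, c.2 - 1) ≠ c := by
        intro e
        have := congrArg Prod.snd e
        simp only at this
        omega
      have hpnec' : (c.1, c.2 - 1) ≠ c' := by
        intro e
        have := congrArg Prod.fst e
        rw [hc'def] at this
        simp only at this
        omega
      refine ⟨(c.1, c.2 - 1), hpμ, hpnec, hpnec', le_rfl, by omega, ?_, ?_, ?_⟩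
      · rw [mem_erase, mem_erase]
        exact ⟨⟨hpμ, hpnec⟩, hpnec'⟩
      · -- below neighbour (c.1 + 1, c.2 - 1)
        show (c.1 + 1, c.2 - 1) ∉ ν₂
        by_cases hc2L : c.2 = L
        · have he : (c.1 + 1, c.2 - 1) = c' := by
            rw [hc'def]
            have e1 : c.1 + 1 = r' := hcase
            have e2 : c.2 - 1 = L - 1 := by omega
            rw [e1, e2]
          rw [he]
          exact self_notmem_erase
        · have hne : (c.1 + 1, c.2 - 1) ∉ μ := by
            rw [YoungDiagram.mem_iff_lt_rowLen]
            omega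
          exact notmem_erase (notmem_erase hne)
      · -- right neighbour (c.1, c.2 - 1 + 1) = c
        show (c.1, c.2 - 1 + 1) ∉ ν₂
        have he : (c.1, c.2 - 1 + 1) = c := by
          have e2 : c.2 - 1 + 1 = c.2 := by omega
          rw [e2]
        rw [he]
        exact notmem_erase self_notmem_erase
    · -- c.1 + 1 < r' : take p = (r' - 1, L - 1)
      have hrow' : μ.rowLen (r' - 1) = L := hroweq (r' - 1) (by omega) (by omega)
      have hpμ : (r' - 1, L - 1) ∈ μ := by
        rw [YoungDiagram.mem_iff_lt_rowLen, hrow']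
        omega
      have hpnec : (r' - 1, L - 1) ≠ c := by
        intro e
        have := congrArg Prod.fst e
        simp only at this
        omega
      have hpnec' : (r' - 1, L - 1) ≠ c' := by
        intro e
        have := congrArg Prod.fst e
        rw [hc'def] at this
        simp only at this
        omega
      refine ⟨(r' - 1, L - 1), hpμ, hpnec, hpnec', by omega, by omega, ?_, ?_, ?_⟩
      · rw [mem_erase, mem_erase]
        exact ⟨⟨hpμ, hpnec⟩, hpnec'⟩
      · -- below neighbour (r' - 1 + 1, L - 1) = c'
        show (r' - 1 + 1, L - 1) ∉ ν₂
        have he : (r' - 1 + 1, L - 1) = c' := by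
          rw [hc'def]
          have e1 : r' - 1 + 1 = r' := by omega
          rw [e1]
        rw [he]
        exact self_notmem_erase
      · -- right neighbour (r' - 1, L - 1 + 1) = (r' - 1, L) ∉ μ
        show (r' - 1, L - 1 + 1) ∉ ν₂
        have hne : (r' - 1, L - 1 + 1) ∉ μ := by
          rw [YoungDiagram.mem_iff_lt_rowLen, hrow']
          omega
        exact notmem_erase (notmem_erase hne)
  -- now build the target tableau
  set ν₃ := erase ν₂ p hpcorner with hν₃def
  obtain ⟨g, hg⟩ := exists_isSYT ν₃.card ν₃ rfl
  have hcard1 : ν.card + 1 = μ.card := card_erase hc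
  have hcard2 : ν₂.card + 1 = ν.card := card_erase hc'ν
  have hpos : 0 < ν₂.card := Finset.card_pos.mpr ⟨p, (YoungDiagram.mem_cells _).mpr hpcorner.1⟩
  set h₁ := ext p ν₂.card g with hh₁def
  have hh₁ : IsSYT ν₂ h₁ := isSYT_ext hpcorner hg
  set h₂ := ext c' ν.card h₁ with hh₂def
  have hh₂ : IsSYT ν h₂ := isSYT_ext hc'ν hh₁
  set T1 := ext c μ.card h₂ with hT1def
  have hT1 : IsSYT μ T1 := isSYT_ext hc hh₂
  have hT1c : T1 c = μ.card := by rw [hT1def]; exact ext_self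
  have hT1c' : T1 c' = ν.card := by rw [hT1def, ext_ne hc'nec, hh₂def]; exact ext_self
  have hT1p : T1 p = ν₂.card := by
    rw [hT1def, ext_ne hpc, hh₂def, ext_ne hpc', hh₁def]; exact ext_self
  have hres : IsSYT ν (res c f) := isSYT_res hf hc hfc
  have hνlt : ν.card < μ.card := by omega
  have step1 : Relation.ReflTransGen (InitialDKT ν) (res c f) h₂ := IH ν hνlt _ _ hres hh₂
  have step1' : Relation.ReflTransGen (InitialDKT μ) f T1 := by
    have h' := rtg_ext hc step1
    rw [ext_res hfc] at h'
    exact h'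
  set nn := μ.card with hnndef
  have hn3 : 3 ≤ nn := by omega
  set T2 : ℕ × ℕ → ℕ :=
    fun x => if T1 x = nn - 1 then nn - 1 + 1 else if T1 x = nn - 1 + 1 then nn - 1 else T1 x
    with hT2def
  have hv1 : T1 c' = nn - 1 := by rw [hT1c']; omega
  have hv2 : T1 c = nn - 1 + 1 := by rw [hT1c]; omega
  have hv3 : T1 p = nn - 1 - 1 := by rw [hT1p]; omega
  have hrowne : c'.1 ≠ c.1 := by
    show r' ≠ c.1
    omega
  have hcolne : c'.2 ≠ c.2 := by
    show L - 1 ≠ c.2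
    omega
  have hT2 : IsSYT μ T2 :=
    isSYT_swap hT1 (by omega) hc'mem hc.1 hv1 hv2 hrowne hcolne T2 (fun x => by rw [hT2def])
  have hw1 : T2 c' = nn - 1 + 1 := by
    rw [hT2def]
    simp only []
    rw [hv1, if_pos rfl]
  have hw2 : T2 c = nn - 1 := by
    rw [hT2def]
    simp only []
    rw [hv2, if_neg (by omega), if_pos rfl]
  have hw3 : T2 p = nn - 1 - 1 := by
    rw [hT2def]
    simp only []
    rw [hv3, if_neg (by omega), if_neg (by omega)]
  have hTinj := isSYT_injOn hT1
  have hTinj2 := isSYT_injOn hT2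
  have hD1 : SYTDescents μ T1 ∩ {nn - 1 - 1, nn - 1} = {nn - 1 - 1} := by
    ext j
    simp only [Set.mem_inter_iff, Set.mem_insert_iff, Set.mem_singleton_iff]
    constructor
    · rintro ⟨hdj, hj | hj⟩
      · exact hj
      · exfalso
        obtain ⟨x, hx, y, hy, e1, e2, hlty⟩ := hdj
        rw [hj] at e1 e2
        have hx' : x = c' := hTinj x hx c' hc'mem (e1.trans hv1.symm)
        have hy' : y = c := hTinj y hy c hc.1 (e2.trans hv2.symm)
        rw [hx', hy'] at hlty
        omega
    · rintro rfl
      refine ⟨⟨p, hpmem, c', hc'mem, hv3, ?_, ?_⟩, Or.inl rfl⟩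
      · rw [hv1]; omega
      · exact hprow2
  have hD2 : SYTDescents μ T2 ∩ {nn - 1 - 1, nn - 1} = {nn - 1} := by
    ext j
    simp only [Set.mem_inter_iff, Set.mem_insert_iff, Set.mem_singleton_iff]
    constructor
    · rintro ⟨hdj, hj | hj⟩
      · exfalso
        obtain ⟨x, hx, y, hy, e1, e2, hlty⟩ := hdj
        rw [hj] at e1 e2
        have he : nn - 1 - 1 + 1 = nn - 1 := by omega
        rw [he] at e2
        have hx' : x = p := hTinj2 x hx p hpmem (e1.trans hw3.symm)
        have hy' : y = c := hTinj2 y hy c hc.1 (e2.trans hw2.symm)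
        rw [hx', hy'] at hlty
        omega
      · exact hj
    · rintro rfl
      refine ⟨⟨c, hc.1, c', hc'mem, hw2, hw1, hrr⟩, Or.inr rfl⟩
  have hstep : InitialDKT μ T1 T2 := by
    refine ⟨nn - 1, ⟨hT1, hT2, by omega, fun x => by rw [hT2def]⟩, ?_, ?_⟩
    · rw [hD1]; exact Set.ncard_singleton _
    · rw [hD2]; exact Set.ncard_singleton _
  refine ⟨c', T2, hc'corner, hrr, hT2, ?_, step1'.tail hstep⟩
  rw [hw1]
  omega

end SYTAux
namespace SYTAux

lemma bottom_eq {μ : YoungDiagram} {c : ℕ × ℕ} (hc : IsCorner μ c)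
    (h : μ.colLen 0 ≤ c.1 + 1) :
    c = (μ.colLen 0 - 1, μ.rowLen (μ.colLen 0 - 1) - 1) := by
  have h1 : c.1 < μ.colLen c.2 := by
    rw [← YoungDiagram.mem_iff_lt_colLen]
    exact pair_mem μ c hc.1
  have h2 : μ.colLen c.2 ≤ μ.colLen 0 := μ.colLen_anti 0 c.2 (by omega)
  have e1 : c.1 = μ.colLen 0 - 1 := by omega
  have h3 : c.2 < μ.rowLen c.1 := by
    rw [← YoungDiagram.mem_iff_lt_rowLen]
    exact pair_mem μ c hc.1
  have h4 : ¬ (c.2 + 1 < μ.rowLen c.1) := by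
    rw [← YoungDiagram.mem_iff_lt_rowLen]
    exact hc.2.2
  have e2 : c.2 = μ.rowLen c.1 - 1 := by omega
  have := Prod.mk.eta (p := c)
  rw [← this, e2, e1]

lemma toBottom {μ : YoungDiagram} :
    ∀ (k : ℕ) (f : ℕ × ℕ → ℕ) (c : ℕ × ℕ), IsSYT μ f → IsCorner μ c → f c = μ.card →
    μ.colLen 0 ≤ c.1 + 1 + k →
    (∀ (ν : YoungDiagram), ν.card < μ.card → ∀ g g' : ℕ × ℕ → ℕ, IsSYT ν g → IsSYT ν g' →
      Relation.ReflTransGen (InitialDKT ν) g g') →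
    ∃ f', IsSYT μ f' ∧ f' (μ.colLen 0 - 1, μ.rowLen (μ.colLen 0 - 1) - 1) = μ.card ∧
      Relation.ReflTransGen (InitialDKT μ) f f' := by
  intro k
  induction k with
  | zero =>
    intro f c hf hc hfc hlen _
    have he := bottom_eq hc (by omega)
    exact ⟨f, hf, by rw [← he]; exact hfc, Relation.ReflTransGen.refl⟩
  | succ m ihm =>
    intro f c hf hc hfc hlen IH
    by_cases hb : (c.1 + 1, 0) ∈ μ
    · obtain ⟨c2, f2, hc2, hlt, hf2, hfc2, hr⟩ := moveStep hf hc hfc hb IH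
      obtain ⟨f', h1, h2, h3⟩ := ihm f2 c2 hf2 hc2 hfc2 (by omega) IH
      exact ⟨f', h1, h2, hr.trans h3⟩
    · have hcl : μ.colLen 0 ≤ c.1 + 1 := by
        rw [YoungDiagram.mem_iff_lt_colLen] at hb
        omega
      have he := bottom_eq hc hcl
      exact ⟨f, hf, by rw [← he]; exact hfc, Relation.ReflTransGen.refl⟩

theorem connAux : ∀ (n : ℕ) (μ : YoungDiagram), μ.card = n →
    ∀ f g : ℕ × ℕ → ℕ, IsSYT μ f → IsSYT μ g →
    Relation.ReflTransGen (InitialDKT μ) f g := by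
  intro n
  induction n using Nat.strong_induction_on with
  | _ n IH =>
    intro μ hn f g hf hg
    rcases Nat.eq_zero_or_pos n with h0 | hpos
    · have hempty : μ.cells = ∅ := Finset.card_eq_zero.mp (by rw [← h0]; exact hn)
      have : f = g := by
        funext x
        have hx : x ∉ μ := by
          intro hm
          have : x ∈ (∅ : Finset (ℕ × ℕ)) := hempty ▸ (YoungDiagram.mem_cells _).mpr hm
          simp at this
        rw [hf.1 x hx, hg.1 x hx]
      rw [this]
    · have hcard : 1 ≤ μ.card := by omega
      have hIH : ∀ (ν : YoungDiagram), ν.card < μ.card → ∀ a b : ℕ × ℕ → ℕ, IsSYT ν a →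
          IsSYT ν b → Relation.ReflTransGen (InitialDKT ν) a b := by
        intro ν hν a b ha hb
        exact IH ν.card (by omega) ν rfl a b ha hb
      obtain ⟨cf, hcf, hfcf⟩ := isSYT_surj hf μ.card hcard le_rfl
      have hcorf := max_corner hf hcf hfcf
      obtain ⟨cg, hcg, hgcg⟩ := isSYT_surj hg μ.card hcard le_rfl
      have hcorg := max_corner hg hcg hgcg
      obtain ⟨f1, hf1, hf1b, hrf⟩ :=
        toBottom (μ.colLen 0) f cf hf hcorf hfcf (by omega) hIH
      obtain ⟨g1, hg1, hg1b, hrg⟩ :=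
        toBottom (μ.colLen 0) g cg hg hcorg hgcg (by omega) hIH
      have hcBmem : (μ.colLen 0 - 1, μ.rowLen (μ.colLen 0 - 1) - 1) ∈ μ := by
        by_contra hnm
        have h0' := hf1.1 _ hnm
        rw [hf1b] at h0'
        omega
      have hcorB := max_corner hf1 hcBmem hf1b
      have hresf := isSYT_res hf1 hcorB hf1b
      have hresg := isSYT_res hg1 hcorB hg1b
      have hν : (erase μ _ hcorB).card < μ.card := by
        have := card_erase hcorB; omega
      have hmid := rtg_ext hcorB (hIH _ hν _ _ hresf hresg)
      rw [ext_res hf1b, ext_res hg1b] at hmid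
      exact (hrf.trans hmid).trans (rtg_symm hrg)

end SYTAux

/-- The graph on standard Young tableaux of a fixed shape `λ` whose edges are
the initial dual Knuth transformations is connected. -/
theorem initialDKT_connected (μ : YoungDiagram) (f g : ℕ × ℕ → ℕ)
    (hf : IsSYT μ f) (hg : IsSYT μ g) :
    Relation.ReflTransGen (InitialDKT μ) f g := by
  exact SYTAux.connAux μ.card μ rfl f g hf hg
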